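/- Let F2'=⟨f1+f3, e1-e3⟩ ⊆ F3'=⟨f1+f3, e1-e3, f2⟩ in the 6-dimensional symplectic space V. An element (g1,g2) of (GL2 ⊠ GSp4)(Q) stabilizes the flag F2'⊆F3' if and only if there exist a,b,c,d with g1 = [[a,-b],[-c,d]] (on ⟨e1,f1⟩) and g2 acting on ⟨e2,e3,f3,f2⟩ by a matrix of the form [[*,0,0,*],[0,a,b,0],[0,c,d,0],[0,0,0,*]] (in the ordered basis e2,e3,f3,f2) subject to the symplectic similitude condition. -/
import Mathlib


/-! The stabilizer in `GL2 ⊠ GSp4` of the flag `⟨f1+f3, e1−e3⟩ ⊆ ⟨f1+f3, e1−e3, f2⟩`. -/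

abbrev V6 : Type := Fin 6 → ℚ

/-- Symplectic form; indices `0,…,5` are `e1,e2,e3,f3,f2,f1`. -/
def symp (x y : V6) : ℚ :=
  x 0 * y 5 - x 5 * y 0 + x 1 * y 4 - x 4 * y 1 + x 2 * y 3 - x 3 * y 2

def e1 : V6 := Pi.single 0 1
def e2 : V6 := Pi.single 1 1
def e3 : V6 := Pi.single 2 1
def f3 : V6 := Pi.single 3 1
def f2 : V6 := Pi.single 4 1
def f1 : V6 := Pi.single 5 1

def V1 : Submodule ℚ V6 := Submodule.span ℚ {e1, f1}
def V2 : Submodule ℚ V6 := Submodule.span ℚ {e2, e3, f3, f2}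

/-- `(GL2 ⊠ GSp4)(ℚ)`: invertible linear maps preserving `V1` and `V2` and scaling the
symplectic form by a single nonzero similitude factor (the symplectic similitude condition). -/
def Hgrp : Set (V6 ≃ₗ[ℚ] V6) :=
  {g | (∃ ν : ℚ, ν ≠ 0 ∧ ∀ x y : V6, symp (g x) (g y) = ν * symp x y) ∧
    Submodule.map (g : V6 →ₗ[ℚ] V6) V1 = V1 ∧ Submodule.map (g : V6 →ₗ[ℚ] V6) V2 = V2}

/-- `F2' = ⟨f1+f3, e1−e3⟩`. -/
def F2' : Submodule ℚ V6 := Submodule.span ℚ {f1 + f3, e1 - e3}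
/-- `F3' = ⟨f1+f3, e1−e3, f2⟩`. -/
def F3' : Submodule ℚ V6 := Submodule.span ℚ {f1 + f3, e1 - e3, f2}

def K2 : Submodule ℚ V6 where
  carrier := {x | x 1 = 0 ∧ x 4 = 0 ∧ x 0 + x 2 = 0 ∧ x 3 = x 5}
  add_mem' := by
    rintro a b ⟨h1, h2, h3, h4⟩ ⟨k1, k2, k3, k4⟩
    refine ⟨by simp [h1, k1], by simp [h2, k2], ?_, ?_⟩ <;> simp [Pi.add_apply] <;> linarith
  zero_mem' := by simp
  smul_mem' := by
    rintro c x ⟨h1, h2, h3, h4⟩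
    refine ⟨by simp [h1], by simp [h2], ?_, by simp [Pi.smul_apply, h4]⟩
    simp only [Pi.smul_apply, smul_eq_mul]
    linear_combination c * h3

def K3 : Submodule ℚ V6 where
  carrier := {x | x 1 = 0 ∧ x 0 + x 2 = 0 ∧ x 3 = x 5}
  add_mem' := by
    rintro a b ⟨h1, h3, h4⟩ ⟨k1, k3, k4⟩
    refine ⟨by simp [h1, k1], ?_, ?_⟩ <;> simp [Pi.add_apply] <;> linarith
  zero_mem' := by simp
  smul_mem' := by
    rintro c x ⟨h1, h3, h4⟩
    refine ⟨by simp [h1], ?_, by simp [Pi.smul_apply, h4]⟩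
    simp only [Pi.smul_apply, smul_eq_mul]
    linear_combination c * h3

def KV1 : Submodule ℚ V6 where
  carrier := {x | x 1 = 0 ∧ x 2 = 0 ∧ x 3 = 0 ∧ x 4 = 0}
  add_mem' := by
    rintro a b ⟨h1, h2, h3, h4⟩ ⟨k1, k2, k3, k4⟩
    exact ⟨by simp [h1, k1], by simp [h2, k2], by simp [h3, k3], by simp [h4, k4]⟩
  zero_mem' := by simp
  smul_mem' := by
    rintro c x ⟨h1, h2, h3, h4⟩
    exact ⟨by simp [h1], by simp [h2], by simp [h3], by simp [h4]⟩

def KV2 : Submodule ℚ V6 where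
  carrier := {x | x 0 = 0 ∧ x 5 = 0}
  add_mem' := by
    rintro a b ⟨h1, h2⟩ ⟨k1, k2⟩
    exact ⟨by simp [h1, k1], by simp [h2, k2]⟩
  zero_mem' := by simp
  smul_mem' := by
    rintro c x ⟨h1, h2⟩
    exact ⟨by simp [h1], by simp [h2]⟩

lemma memF2 (x : V6) : x ∈ F2' ↔ x 1 = 0 ∧ x 4 = 0 ∧ x 0 + x 2 = 0 ∧ x 3 = x 5 := by
  constructor
  · intro hx
    have h : F2' ≤ K2 := by
      rw [F2', Submodule.span_le]
      rintro y (rfl | rfl) <;>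
        refine ⟨?_, ?_, ?_, ?_⟩ <;> simp [e1, e3, f1, f3, Pi.single_apply]
    exact h hx
  · rintro ⟨h1, h2, h3, h4⟩
    have hx : x = x 5 • (f1 + f3) + x 0 • (e1 - e3) := by
      funext i
      fin_cases i <;> simp [e1, e3, f1, f3, Pi.single_apply] <;> linarith
    rw [hx]
    exact add_mem (Submodule.smul_mem _ _ (Submodule.subset_span (by simp)))
      (Submodule.smul_mem _ _ (Submodule.subset_span (by simp)))

lemma memF3 (x : V6) : x ∈ F3' ↔ x 1 = 0 ∧ x 0 + x 2 = 0 ∧ x 3 = x 5 := by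
  constructor
  · intro hx
    have h : F3' ≤ K3 := by
      rw [F3', Submodule.span_le]
      rintro y (rfl | rfl | rfl) <;>
        refine ⟨?_, ?_, ?_⟩ <;> simp [e1, e3, f1, f3, f2, Pi.single_apply]
    exact h hx
  · rintro ⟨h1, h3, h4⟩
    have hx : x = x 5 • (f1 + f3) + x 0 • (e1 - e3) + x 4 • f2 := by
      funext i
      fin_cases i <;> simp [e1, e3, f1, f3, f2, Pi.single_apply] <;> linarith
    rw [hx]
    refine add_mem (add_mem ?_ ?_) ?_ <;>
      exact Submodule.smul_mem _ _ (Submodule.subset_span (by simp))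

lemma memV1 (x : V6) : x ∈ V1 ↔ x 1 = 0 ∧ x 2 = 0 ∧ x 3 = 0 ∧ x 4 = 0 := by
  constructor
  · intro hx
    have h : V1 ≤ KV1 := by
      rw [V1, Submodule.span_le]
      rintro y (rfl | rfl) <;>
        refine ⟨?_, ?_, ?_, ?_⟩ <;> simp [e1, f1, Pi.single_apply]
    exact h hx
  · rintro ⟨h1, h2, h3, h4⟩
    have hx : x = x 0 • e1 + x 5 • f1 := by
      funext i
      fin_cases i <;> simp [e1, f1, Pi.single_apply] <;> linarith
    rw [hx]
    exact add_mem (Submodule.smul_mem _ _ (Submodule.subset_span (by simp)))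
      (Submodule.smul_mem _ _ (Submodule.subset_span (by simp)))

lemma memV2 (x : V6) : x ∈ V2 ↔ x 0 = 0 ∧ x 5 = 0 := by
  constructor
  · intro hx
    have h : V2 ≤ KV2 := by
      rw [V2, Submodule.span_le]
      rintro y (rfl | rfl | rfl | rfl) <;>
        refine ⟨?_, ?_⟩ <;> simp [e2, e3, f3, f2, Pi.single_apply]
    exact h hx
  · rintro ⟨h1, h2⟩
    have hx : x = x 1 • e2 + x 2 • e3 + x 3 • f3 + x 4 • f2 := by
      funext i
      fin_cases i <;> simp [e2, e3, f3, f2, Pi.single_apply] <;> linarith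
    rw [hx]
    refine add_mem (add_mem (add_mem ?_ ?_) ?_) ?_ <;>
      exact Submodule.smul_mem _ _ (Submodule.subset_span (by simp))

lemma e1_apply (i : Fin 6) : e1 i = if i = 0 then 1 else 0 := by
  simp [e1, Pi.single_apply, eq_comm]
lemma e2_apply (i : Fin 6) : e2 i = if i = 1 then 1 else 0 := by
  simp [e2, Pi.single_apply, eq_comm]
lemma e3_apply (i : Fin 6) : e3 i = if i = 2 then 1 else 0 := by
  simp [e3, Pi.single_apply, eq_comm]
lemma f3_apply (i : Fin 6) : f3 i = if i = 3 then 1 else 0 := by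
  simp [f3, Pi.single_apply, eq_comm]
lemma f2_apply (i : Fin 6) : f2 i = if i = 4 then 1 else 0 := by
  simp [f2, Pi.single_apply, eq_comm]
lemma f1_apply (i : Fin 6) : f1 i = if i = 5 then 1 else 0 := by
  simp [f1, Pi.single_apply, eq_comm]


/-- An element `(g1, g2)` of `(GL2 ⊠ GSp4)(ℚ)` stabilizes the flag `F2' ⊆ F3'` if and only
if there are `a, b, c, d` with `g1 = [[a,-b],[-c,d]]` on `⟨e1,f1⟩` and `g2` acting on
`⟨e2,e3,f3,f2⟩` by a matrix `[[*,0,0,*],[0,a,b,0],[0,c,d,0],[0,0,0,*]]` in the ordered basis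
`e2, e3, f3, f2` (the similitude condition being part of membership in the group). -/
theorem stab_flag_iff (g : V6 ≃ₗ[ℚ] V6) (hg : g ∈ Hgrp) :
    (Submodule.map (g : V6 →ₗ[ℚ] V6) F2' = F2' ∧
      Submodule.map (g : V6 →ₗ[ℚ] V6) F3' = F3') ↔
    ∃ a b c d s u w : ℚ,
      g e1 = a • e1 - b • f1 ∧
      g f1 = -c • e1 + d • f1 ∧
      g e3 = a • e3 + b • f3 ∧
      g f3 = c • e3 + d • f3 ∧
      g e2 = s • e2 + u • f2 ∧
      g f2 = w • f2 := by
  obtain ⟨⟨ν, hν0, hν⟩, hV1, hV2⟩ := hg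
  constructor
  · rintro ⟨h2, h3⟩
    -- memberships of images
    have pres1 : ∀ x ∈ V1, g x ∈ V1 := fun x hx => hV1 ▸ Submodule.mem_map_of_mem hx
    have pres2 : ∀ x ∈ V2, g x ∈ V2 := fun x hx => hV2 ▸ Submodule.mem_map_of_mem hx
    have presF2 : ∀ x ∈ F2', g x ∈ F2' := fun x hx => h2 ▸ Submodule.mem_map_of_mem hx
    have presF3 : ∀ x ∈ F3', g x ∈ F3' := fun x hx => h3 ▸ Submodule.mem_map_of_mem hx
    obtain ⟨A1, A2, A3, A4⟩ := (memV1 _).1 (pres1 e1 (Submodule.subset_span (by simp)))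
    obtain ⟨B1, B2, B3, B4⟩ := (memV1 _).1 (pres1 f1 (Submodule.subset_span (by simp)))
    obtain ⟨C1, C2⟩ := (memV2 _).1 (pres2 e2 (Submodule.subset_span (by simp)))
    obtain ⟨D1, D2⟩ := (memV2 _).1 (pres2 e3 (Submodule.subset_span (by simp)))
    obtain ⟨E1, E2⟩ := (memV2 _).1 (pres2 f3 (Submodule.subset_span (by simp)))
    obtain ⟨G1, G2⟩ := (memV2 _).1 (pres2 f2 (Submodule.subset_span (by simp)))
    have hX : g f1 + g f3 ∈ F2' := by
      have := presF2 (f1 + f3) (Submodule.subset_span (by simp))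
      rwa [map_add] at this
    have hY : g e1 - g e3 ∈ F2' := by
      have := presF2 (e1 - e3) (Submodule.subset_span (by simp))
      rwa [map_sub] at this
    obtain ⟨X1, X2, X3, X4⟩ := (memF2 _).1 hX
    obtain ⟨Y1, Y2, Y3, Y4⟩ := (memF2 _).1 hY
    simp only [Pi.add_apply] at X1 X2 X3 X4
    simp only [Pi.sub_apply] at Y1 Y2 Y3 Y4
    obtain ⟨Z1, Z3, Z4⟩ := (memF3 _).1 (presF3 f2 (Submodule.subset_span (by simp)))
    refine ⟨g e1 0, -(g e1 5), -(g f1 0), g f1 5, g e2 1, g e2 4, g f2 4, ?_, ?_, ?_, ?_, ?_, ?_⟩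
    · funext i
      fin_cases i <;> simp [e1_apply, f1_apply] <;> linarith
    · funext i
      fin_cases i <;> simp [e1_apply, f1_apply] <;> linarith
    · funext i
      fin_cases i <;> simp [e3_apply, f3_apply] <;> linarith
    · funext i
      fin_cases i <;> simp [e3_apply, f3_apply] <;> linarith
    · -- g e2
      have He3 : g e3 = g e1 0 • e3 + -(g e1 5) • f3 := by
        funext i
        fin_cases i <;> simp [e3_apply, f3_apply] <;> linarith
      have Hf3 : g f3 = -(g f1 0) • e3 + g f1 5 • f3 := by
        funext i
        fin_cases i <;> simp [e3_apply, f3_apply] <;> linarith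
      have hs1 := hν e2 e3
      have hs2 := hν e2 f3
      have hs3 := hν e3 f3
      rw [He3] at hs1
      rw [Hf3] at hs2
      rw [He3, Hf3] at hs3
      simp [symp, e2_apply, e3_apply, f3_apply] at hs1 hs2 hs3
      have hp : g e2 2 = 0 := by
        have h : g e2 2 * ν = 0 := by
          linear_combination (g f1 0) * hs1 + (g e1 0) * hs2 - (g e2 2) * hs3
        exact (mul_eq_zero.mp h).resolve_right hν0
      have hq : g e2 3 = 0 := by
        have h : g e2 3 * ν = 0 := by
          linear_combination -(g f1 5) * hs1 - (g e1 5) * hs2 - (g e2 3) * hs3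
        exact (mul_eq_zero.mp h).resolve_right hν0
      funext i
      fin_cases i <;> simp [e2_apply, f2_apply] <;> linarith
    · funext i
      fin_cases i <;> simp [f2_apply] <;> linarith
  · rintro ⟨a, b, c, d, s, u, w, he1, hf1, he3, hf3, he2, hf2⟩
    constructor
    · refine Submodule.eq_of_le_of_finrank_eq ?_ ?_
      · rw [F2', Submodule.map_span, Submodule.span_le]
        rintro y ⟨z, (rfl | rfl), rfl⟩
        · rw [SetLike.mem_coe, ← F2', memF2]
          rw [map_add]
          show ((g : V6 →ₗ[ℚ] V6) f1 + (g : V6 →ₗ[ℚ] V6) f3) 1 = 0 ∧ _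
          rw [show ((g : V6 →ₗ[ℚ] V6) f1) = g f1 from rfl, show ((g : V6 →ₗ[ℚ] V6) f3) = g f3 from rfl, hf1, hf3]
          refine ⟨?_, ?_, ?_, ?_⟩ <;> simp [e1_apply, e3_apply, f1_apply, f3_apply] <;> ring
        · rw [SetLike.mem_coe, ← F2', memF2]
          rw [map_sub]
          show ((g : V6 →ₗ[ℚ] V6) e1 - (g : V6 →ₗ[ℚ] V6) e3) 1 = 0 ∧ _
          rw [show ((g : V6 →ₗ[ℚ] V6) e1) = g e1 from rfl, show ((g : V6 →ₗ[ℚ] V6) e3) = g e3 from rfl, he1, he3]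
          refine ⟨?_, ?_, ?_, ?_⟩ <;> simp [e1_apply, e3_apply, f1_apply, f3_apply] <;> ring
      · exact LinearEquiv.finrank_map_eq g F2'
    · refine Submodule.eq_of_le_of_finrank_eq ?_ ?_
      · rw [F3', Submodule.map_span, Submodule.span_le]
        rintro y ⟨z, (rfl | rfl | rfl), rfl⟩
        · rw [SetLike.mem_coe, ← F3', memF3]
          rw [map_add]
          show ((g : V6 →ₗ[ℚ] V6) f1 + (g : V6 →ₗ[ℚ] V6) f3) 1 = 0 ∧ _
          rw [show ((g : V6 →ₗ[ℚ] V6) f1) = g f1 from rfl, show ((g : V6 →ₗ[ℚ] V6) f3) = g f3 from rfl, hf1, hf3]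
          refine ⟨?_, ?_, ?_⟩ <;> simp [e1_apply, e3_apply, f1_apply, f3_apply] <;> ring
        · rw [SetLike.mem_coe, ← F3', memF3]
          rw [map_sub]
          show ((g : V6 →ₗ[ℚ] V6) e1 - (g : V6 →ₗ[ℚ] V6) e3) 1 = 0 ∧ _
          rw [show ((g : V6 →ₗ[ℚ] V6) e1) = g e1 from rfl, show ((g : V6 →ₗ[ℚ] V6) e3) = g e3 from rfl, he1, he3]
          refine ⟨?_, ?_, ?_⟩ <;> simp [e1_apply, e3_apply, f1_apply, f3_apply] <;> ring
        · rw [SetLike.mem_coe, ← F3', memF3]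
          rw [show ((g : V6 →ₗ[ℚ] V6) f2) = g f2 from rfl, hf2]
          refine ⟨?_, ?_, ?_⟩ <;> simp [f2_apply]
      · exact LinearEquiv.finrank_map_eq g F3'
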